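/- Let X be a compact Hausdorff space and A = C(X,ℂ) the C*-algebra of continuous complex-valued functions on X with pointwise operations and complex conjugation as involution. For a continuous function n : X → ℤ (ℤ discrete, so n is locally constant), let Φ(n) ∈ A[t,t⁻¹] be the Laurent polynomial whose i-th coefficient is the indicator function of n⁻¹({i}) (which is continuous). Then Φ is a group isomorphism from the additive group C(X,ℤ) of continuous ℤ-valued functions onto PPU(A), and Φ(n) ∈ PPU⁺(A) if and only if n(x) ≥ 0 for all x ∈ X. Thus PPU(A), right-ordered by the positive cone PPU⁺(A), is isomorphic as an ordered group to C(X,ℤ) with the pointwise order. -/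

import Mathlib

noncomputable section

/-- Finite Laurent polynomials `A[t,t⁻¹]` over a ring `A`, with convolution product. -/
abbrev Laurent (A : Type*) [Ring A] : Type _ := AddMonoidAlgebra A ℤ

/-- The involution `φ* = Σ tⁱ (φ₋ᵢ)*` on `A[t,t⁻¹]`. -/
def lstar {A : Type*} [Ring A] [StarRing A] (φ : Laurent A) : Laurent A :=
  AddMonoidAlgebra.ofCoeff (Finsupp.equivMapDomain (Equiv.neg ℤ) (Finsupp.mapRange star (star_zero _) φ.coeff))

/-- The specialization `ε₁ : A[t,t⁻¹] → A`, `φ ↦ Σᵢ φᵢ`. -/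
def eps1 {A : Type*} [Ring A] (φ : Laurent A) : A := φ.coeff.sum fun _ a => a

/-- The pure paraunitary group `PPU(A)` (as a set). -/
def PPUA (A : Type*) [Ring A] [StarRing A] : Set (Laurent A) :=
  {φ | (lstar φ * φ = 1 ∧ φ * lstar φ = 1) ∧ eps1 φ = 1}

/-- `PPU⁺(A) = PPU(A) ∩ A[t]`. -/
def PPUAplus (A : Type*) [Ring A] [StarRing A] : Set (Laurent A) :=
  {φ | φ ∈ PPUA A ∧ ∀ i < (0 : ℤ), φ.coeff i = 0}

/-! ### Auxiliary development -/


namespace Stmt5Aux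

lemma lstar_apply {A : Type*} [Ring A] [StarRing A] (φ : Laurent A) (i : ℤ) :
    (lstar φ).coeff i = star (φ.coeff (-i)) := rfl

/-- A monomial classification: a factor of `1` in `ℂ[t,t⁻¹]` is a monomial. -/
lemma mul_apply_le (f g : AddMonoidAlgebra ℂ ℤ) (ap aq : ℤ)
    (hp : ∀ a ∈ f.coeff.support, a ≤ ap) (hq : ∀ b ∈ g.coeff.support, b ≤ aq) :
    (f * g).coeff (ap + aq) = f.coeff ap * g.coeff aq := by
  classical
  simp_rw [AddMonoidAlgebra.mul_apply, Finsupp.sum]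
  rw [Finset.sum_eq_single ap, Finset.sum_eq_single aq, if_pos rfl]
  · intro b hb hne
    rw [if_neg]; intro he; exact hne (by omega)
  · intro h; rw [if_pos rfl, Finsupp.notMem_support_iff.1 h, mul_zero]
  · intro a ha hne
    refine Finset.sum_eq_zero fun b hb => if_neg fun he => ?_
    have h1 := hp a ha; have h2 := hq b hb
    omega
  · intro h
    refine Finset.sum_eq_zero fun b _ => ?_
    rw [Finsupp.notMem_support_iff.1 h, zero_mul]
    exact ite_self 0

lemma mul_apply_ge (f g : AddMonoidAlgebra ℂ ℤ) (ap aq : ℤ)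
    (hp : ∀ a ∈ f.coeff.support, ap ≤ a) (hq : ∀ b ∈ g.coeff.support, aq ≤ b) :
    (f * g).coeff (ap + aq) = f.coeff ap * g.coeff aq := by
  classical
  simp_rw [AddMonoidAlgebra.mul_apply, Finsupp.sum]
  rw [Finset.sum_eq_single ap, Finset.sum_eq_single aq, if_pos rfl]
  · intro b hb hne
    rw [if_neg]; intro he; exact hne (by omega)
  · intro h; rw [if_pos rfl, Finsupp.notMem_support_iff.1 h, mul_zero]
  · intro a ha hne
    refine Finset.sum_eq_zero fun b hb => if_neg fun he => ?_
    have h1 := hp a ha; have h2 := hq b hb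
    omega
  · intro h
    refine Finset.sum_eq_zero fun b _ => ?_
    rw [Finsupp.notMem_support_iff.1 h, zero_mul]
    exact ite_self 0

lemma unit_is_single (f g : AddMonoidAlgebra ℂ ℤ) (h : f * g = 1) :
    ∃ (k : ℤ) (c : ℂ), c ≠ 0 ∧ f = AddMonoidAlgebra.single k c := by
  classical
  have hf : f ≠ 0 := by rintro rfl; rw [zero_mul] at h; exact one_ne_zero h.symm
  have hg : g ≠ 0 := by rintro rfl; rw [mul_zero] at h; exact one_ne_zero h.symm
  have hfs : f.coeff.support.Nonempty :=
    Finsupp.support_nonempty_iff.mpr (by rwa [Ne, AddMonoidAlgebra.coeff_eq_zero])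
  have hgs : g.coeff.support.Nonempty :=
    Finsupp.support_nonempty_iff.mpr (by rwa [Ne, AddMonoidAlgebra.coeff_eq_zero])
  set Mf := f.coeff.support.max' hfs
  set Mg := g.coeff.support.max' hgs
  set mf := f.coeff.support.min' hfs
  set mg := g.coeff.support.min' hgs
  have h1 : (f * g).coeff (Mf + Mg) = f.coeff Mf * g.coeff Mg :=
    mul_apply_le f g Mf Mg (fun a ha => Finset.le_max' _ a ha)
      (fun b hb => Finset.le_max' _ b hb)
  have h1' : (f * g).coeff (mf + mg) = f.coeff mf * g.coeff mg :=
    mul_apply_ge f g mf mg (fun a ha => Finset.min'_le _ a ha)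
      (fun b hb => Finset.min'_le _ b hb)
  have hM : f.coeff Mf * g.coeff Mg ≠ 0 :=
    mul_ne_zero (Finsupp.mem_support_iff.mp (f.coeff.support.max'_mem hfs))
      (Finsupp.mem_support_iff.mp (g.coeff.support.max'_mem hgs))
  have hm : f.coeff mf * g.coeff mg ≠ 0 :=
    mul_ne_zero (Finsupp.mem_support_iff.mp (f.coeff.support.min'_mem hfs))
      (Finsupp.mem_support_iff.mp (g.coeff.support.min'_mem hgs))
  have hone : ∀ j : ℤ, (1 : AddMonoidAlgebra ℂ ℤ).coeff j ≠ 0 → j = 0 := by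
    intro j hj
    rw [AddMonoidAlgebra.one_def] at hj
    by_contra hne
    rw [AddMonoidAlgebra.coeff_single, Finsupp.single_apply, if_neg (fun hh => hne hh.symm)] at hj
    exact hj rfl
  have e1 : Mf + Mg = 0 := hone _ (by rw [← h, h1]; exact hM)
  have e2 : mf + mg = 0 := hone _ (by rw [← h, h1']; exact hm)
  have hmf : mf ≤ Mf := Finset.min'_le _ _ (f.coeff.support.max'_mem hfs)
  have hmg : mg ≤ Mg := Finset.min'_le _ _ (g.coeff.support.max'_mem hgs)
  have hsupp : f.coeff.support ⊆ {Mf} := by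
    intro a ha
    have h3 := Finset.le_max' _ a ha
    have h4 := Finset.min'_le _ a ha
    simp only [Finset.mem_singleton]
    omega
  exact ⟨Mf, f.coeff Mf, Finsupp.mem_support_iff.mp (f.coeff.support.max'_mem hfs),
    AddMonoidAlgebra.coeff_injective (Finsupp.support_subset_singleton.mp hsupp)⟩

variable {X : Type*} [TopologicalSpace X]

/-- Evaluation at a point, as a ring homomorphism `C(X,ℂ) →+* ℂ`. -/
def evC (x : X) : C(X, ℂ) →+* ℂ := (Pi.evalRingHom _ x).comp ContinuousMap.coeFnRingHom

/-- Coefficientwise evaluation at a point, as a ring homomorphism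
`C(X,ℂ)[t,t⁻¹] →+* ℂ[t,t⁻¹]`. -/
def ev (x : X) : Laurent C(X, ℂ) →+* Laurent ℂ :=
  AddMonoidAlgebra.liftNCRingHom (AddMonoidAlgebra.singleZeroRingHom.comp (evC x))
    (AddMonoidAlgebra.of ℂ ℤ) (fun _ _ => Commute.all _ _)

lemma ev_single (x : X) (a : ℤ) (b : C(X, ℂ)) :
    ev x (AddMonoidAlgebra.single a b) = AddMonoidAlgebra.single a (b x) := by
  show AddMonoidAlgebra.liftNC _ _ (AddMonoidAlgebra.single a b) = _
  rw [AddMonoidAlgebra.liftNC_single]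
  show AddMonoidAlgebra.single 0 (b x) * AddMonoidAlgebra.single a 1 = _
  rw [AddMonoidAlgebra.single_mul_single, zero_add, mul_one]

lemma ev_apply (x : X) (φ : Laurent C(X, ℂ)) (i : ℤ) : (ev x φ).coeff i = φ.coeff i x := by
  induction φ using AddMonoidAlgebra.induction_linear with
  | zero => simp
  | add f g hf hg => rw [map_add, AddMonoidAlgebra.coeff_add, AddMonoidAlgebra.coeff_add, Finsupp.add_apply, hf, hg]; rfl
  | single a b =>
      rw [ev_single]
      classical
      simp only [AddMonoidAlgebra.coeff_single, Finsupp.single_apply]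
      split <;> rfl

lemma ev_injective (φ ψ : Laurent C(X, ℂ)) (h : ∀ x, ev x φ = ev x ψ) : φ = ψ := by
  ext i x
  have := congrArg (fun f : Laurent ℂ => f.coeff i) (h x)
  simpa only [ev_apply] using this

lemma ev_lstar (x : X) (φ : Laurent C(X, ℂ)) : ev x (lstar φ) = lstar (ev x φ) := by
  ext i
  rw [ev_apply, lstar_apply, lstar_apply, ev_apply]
  rfl

lemma ev_eps1 (x : X) (φ : Laurent C(X, ℂ)) : eps1 (ev x φ) = eps1 φ x := by
  unfold eps1
  induction φ using AddMonoidAlgebra.induction_linear with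
  | zero => simp
  | add f g hf hg =>
      rw [map_add, AddMonoidAlgebra.coeff_add, AddMonoidAlgebra.coeff_add, Finsupp.sum_add_index, Finsupp.sum_add_index, hf, hg] <;> simp
  | single a b =>
      rw [ev_single, AddMonoidAlgebra.coeff_single, AddMonoidAlgebra.coeff_single, Finsupp.sum_single_index rfl, Finsupp.sum_single_index rfl]

/-- The indicator function of `n⁻¹({i})`, as a continuous map. -/
def indC (n : C(X, ℤ)) (i : ℤ) : C(X, ℂ) :=
  ContinuousMap.comp ⟨fun k => if k = i then 1 else 0, continuous_of_discreteTopology⟩ n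

lemma indC_apply (n : C(X, ℤ)) (i : ℤ) (x : X) :
    indC n i x = if n x = i then 1 else 0 := rfl

variable [CompactSpace X]

/-- The map `Φ`. -/
def Phi (n : C(X, ℤ)) : Laurent C(X, ℂ) :=
  ∑ k ∈ ((isCompact_range n.continuous).finite_of_discrete).toFinset,
    AddMonoidAlgebra.single k (indC n k)

lemma Phi_apply (n : C(X, ℤ)) (i : ℤ) (x : X) :
    (Phi n).coeff i x = if n x = i then 1 else 0 := by
  classical
  have : (Phi n).coeff i
      = if i ∈ ((isCompact_range n.continuous).finite_of_discrete).toFinset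
        then indC n i else 0 := by
    unfold Phi
    rw [AddMonoidAlgebra.coeff_sum, Finset.sum_apply']
    simp only [AddMonoidAlgebra.coeff_single, Finsupp.single_apply]
    exact Finset.sum_ite_eq' _ i _
  rw [this]
  split
  · exact indC_apply n i x
  · rename_i hmem
    rw [ContinuousMap.zero_apply, if_neg]
    intro he
    exact hmem (by simpa using ⟨x, he⟩)

lemma ev_Phi (x : X) (n : C(X, ℤ)) : ev x (Phi n) = AddMonoidAlgebra.single (n x) 1 := by
  ext i
  rw [ev_apply, Phi_apply, AddMonoidAlgebra.coeff_single, Finsupp.single_apply]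

lemma Phi_add (m n : C(X, ℤ)) : Phi (m + n) = Phi m * Phi n := by
  apply ev_injective
  intro x
  rw [map_mul, ev_Phi, ev_Phi, ev_Phi]
  show _ = AddMonoidAlgebra.single _ _ * AddMonoidAlgebra.single _ _
  rw [AddMonoidAlgebra.single_mul_single, mul_one]
  rfl

lemma Phi_zero : Phi (0 : C(X, ℤ)) = 1 := by
  apply ev_injective
  intro x
  rw [ev_Phi, map_one]
  show AddMonoidAlgebra.single ((0 : C(X, ℤ)) x) 1 = _
  rw [ContinuousMap.zero_apply, AddMonoidAlgebra.one_def]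

lemma lstar_Phi (n : C(X, ℤ)) : lstar (Phi n) = Phi (-n) := by
  ext i x
  rw [lstar_apply]
  show star ((Phi n).coeff (-i)) x = (Phi (-n)).coeff i x
  rw [ContinuousMap.star_apply, Phi_apply, Phi_apply]
  by_cases h : n x = -i
  · rw [if_pos h, if_pos (by simp [ContinuousMap.neg_apply]; omega), star_one]
  · rw [if_neg h, if_neg (by simp [ContinuousMap.neg_apply]; omega), star_zero]

lemma eps1_Phi (n : C(X, ℤ)) : eps1 (Phi n) = 1 := by
  ext x
  rw [← ev_eps1, ev_Phi]
  show (AddMonoidAlgebra.single (n x) (1 : ℂ)).coeff.sum (fun _ a => a) = (1 : C(X, ℂ)) x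
  rw [AddMonoidAlgebra.coeff_single, Finsupp.sum_single_index rfl, ContinuousMap.one_apply]

lemma Phi_mem_PPUA (n : C(X, ℤ)) : Phi n ∈ PPUA C(X, ℂ) := by
  refine ⟨⟨?_, ?_⟩, eps1_Phi n⟩
  · rw [lstar_Phi, ← Phi_add, neg_add_cancel, Phi_zero]
  · rw [lstar_Phi, ← Phi_add, add_neg_cancel, Phi_zero]

lemma Phi_mem_plus_iff (n : C(X, ℤ)) :
    Phi n ∈ PPUAplus C(X, ℂ) ↔ ∀ x : X, 0 ≤ n x := by
  constructor
  · rintro ⟨-, h⟩ x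
    by_contra hneg
    push_neg at hneg
    have := congrArg (fun f => f x) (h (n x) hneg)
    simp only [ContinuousMap.zero_apply] at this
    rw [Phi_apply, if_pos rfl] at this
    exact one_ne_zero this
  · intro h
    refine ⟨Phi_mem_PPUA n, fun i hi => ?_⟩
    ext x
    rw [Phi_apply, ContinuousMap.zero_apply, if_neg]
    have := h x
    omega

end Stmt5Aux

open Stmt5Aux in
/--
Let `X` be a compact Hausdorff space and `A = C(X,ℂ)` the commutative C*-algebra of
continuous complex-valued functions on `X`.  For `n ∈ C(X,ℤ)` let `Φ(n) ∈ A[t,t⁻¹]` be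
the Laurent polynomial whose `i`-th coefficient is the indicator function of `n⁻¹({i})`.
Then `Φ` is a group isomorphism from the additive group `C(X,ℤ)` onto `PPU(A)`, and
`Φ(n) ∈ PPU⁺(A)` iff `n(x) ≥ 0` for all `x`.  Thus `PPU(A)`, right-ordered by the
positive cone `PPU⁺(A)` (i.e. `φ ≤ φ'` iff `φ'φ⁻¹ = φ'·(lstar φ) ∈ PPU⁺(A)`), is
isomorphic as an ordered group to `C(X,ℤ)` with the pointwise order.
-/
theorem stmt5 {X : Type*} [TopologicalSpace X] [CompactSpace X] [T2Space X] :
    ∃ Φ : C(X, ℤ) → Laurent C(X, ℂ),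
      -- the coefficient formula: (Φ n)ᵢ is the indicator function of n⁻¹({i})
      (∀ (n : C(X, ℤ)) (i : ℤ) (x : X), (Φ n).coeff i x = if n x = i then 1 else 0) ∧
      -- Φ is a homomorphism from the additive group C(X,ℤ) to the multiplicative
      -- structure of C(X,ℂ)[t,t⁻¹]
      (∀ m n : C(X, ℤ), Φ (m + n) = Φ m * Φ n) ∧
      -- Φ is injective with image exactly PPU(C(X,ℂ))
      Function.Injective Φ ∧
      Set.range Φ = PPUA C(X, ℂ) ∧
      -- positivity: Φ n ∈ PPU⁺ iff n ≥ 0 pointwise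
      (∀ n : C(X, ℤ), Φ n ∈ PPUAplus C(X, ℂ) ↔ ∀ x : X, 0 ≤ n x) ∧
      -- order isomorphism: Φ m ≤ Φ n (for the right-invariant order with positive cone
      -- PPU⁺) iff m ≤ n pointwise
      (∀ m n : C(X, ℤ), Φ n * lstar (Φ m) ∈ PPUAplus C(X, ℂ) ↔ ∀ x : X, m x ≤ n x) := by
  classical
  refine ⟨Phi, Phi_apply, Phi_add, ?_, ?_, ?_, ?_⟩
  · -- injectivity
    intro m n h
    ext x
    have := congrArg (fun φ => ev x φ) h
    simp only [ev_Phi] at this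
    have h2 := congrArg (fun f : Laurent ℂ => f.coeff (m x)) this
    simp only [AddMonoidAlgebra.coeff_single, Finsupp.single_apply] at h2
    by_contra hne
    rw [if_pos trivial, if_neg (fun hh => hne hh.symm)] at h2
    exact one_ne_zero h2
  · -- range
    apply Set.eq_of_subset_of_subset
    · rintro _ ⟨n, rfl⟩; exact Phi_mem_PPUA n
    · rintro φ ⟨⟨h1, h2⟩, h3⟩
      have key : ∀ x : X, ∃ k : ℤ, ev x φ = AddMonoidAlgebra.single k 1 := by
        intro x
        have hmul : ev x φ * ev x (lstar φ) = 1 := by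
          rw [← map_mul, h2, map_one]
        obtain ⟨k, c, hc, hk⟩ := unit_is_single _ _ hmul
        have heps : eps1 (ev x φ) = 1 := by
          rw [ev_eps1, h3, ContinuousMap.one_apply]
        rw [hk] at heps
        have : c = 1 := by
          rw [eps1, AddMonoidAlgebra.coeff_single, Finsupp.sum_single_index rfl] at heps
          exact heps
        exact ⟨k, by rw [hk, this]⟩
      choose N hN using key
      have hcoeff : ∀ (i : ℤ) (x : X), φ.coeff i x = if N x = i then 1 else 0 := by
        intro i x
        rw [← ev_apply, hN x, AddMonoidAlgebra.coeff_single, Finsupp.single_apply]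
      have hNpre : ∀ k : ℤ, N ⁻¹' {k} = (φ.coeff k) ⁻¹' ({0}ᶜ) := by
        intro k
        ext x
        simp only [Set.mem_preimage, Set.mem_singleton_iff, Set.mem_compl_iff]
        constructor
        · intro hx
          rw [hcoeff k x, if_pos hx]
          exact one_ne_zero
        · intro hx
          by_contra hne
          rw [hcoeff k x, if_neg hne] at hx
          exact hx rfl
      have hNcont : Continuous N := by
        rw [continuous_discrete_rng]
        intro k
        rw [hNpre k]
        exact IsOpen.preimage (φ.coeff k).continuous isOpen_compl_singleton
      refine ⟨⟨N, hNcont⟩, ?_⟩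
      apply ev_injective
      intro x
      rw [ev_Phi]
      exact (hN x).symm
  · -- positivity
    exact Phi_mem_plus_iff
  · -- order
    intro m n
    rw [lstar_Phi, ← Phi_add, Phi_mem_plus_iff]
    refine forall_congr' fun x => ?_
    simp only [ContinuousMap.add_apply, ContinuousMap.neg_apply]
    omega
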